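/- arXiv:0905.3359 — 4 statements merged into one kernel-verified Lean document; each statement's English description precedes it below -/
import Mathlib

section
/- Given a graph G and any search schedule S, for every time step t the set of e-clear nodes is a subset of the set of n-clear nodes and the set of e-clear edges is a subset of the set of n-clear edges; i.e., the node game dominates the edge game. -/
open SimpleGraph

/-- A move in a graph-search game: place a searcher, remove a searcher,
or slide a searcher along an edge. -/
inductive GMove (V : Type*) where
  | place (v : V)
  | remove (v : V)
  | slide (u v : V)

namespace GMove

/-- The node (if any) entered by the move. -/
def target {V : Type*} : GMove V → Option V
  | place v => some v
  | remove _ => none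
  | slide _ v => some v

/-- The edge (if any) traversed by the move. -/
def traversed {V : Type*} : GMove V → Option (Sym2 V)
  | slide u v => some s(u, v)
  | _ => none

end GMove

variable {V : Type*}

open Classical in
/-- Number of searchers located at each node after `t` moves
(the move between time `t` and `t+1` is `S t`). -/
noncomputable def occ (S : ℕ → GMove V) : ℕ → V → ℕ
  | 0 => fun _ => 0
  | t + 1 => fun x =>
    match S t with
    | .place v => if x = v then occ S t x + 1 else occ S t x
    | .remove v => if x = v then occ S t x - 1 else occ S t x
    | .slide u v =>
        if x = v then occ S t x + 1 else if x = u then occ S t x - 1 else occ S t x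

/-- Number of searchers inside the graph after `t` moves. -/
def sn (S : ℕ → GMove V) : ℕ → ℕ
  | 0 => 0
  | t + 1 =>
    match S t with
    | .place _ => sn S t + 1
    | .remove _ => sn S t - 1
    | .slide _ _ => sn S t

/-- A legal search schedule on `G`: slides go along edges starting from an occupied
node, and removals take place at occupied nodes. -/
def Legal (G : SimpleGraph V) (S : ℕ → GMove V) : Prop :=
  ∀ t, match S t with
    | .place _ => True
    | .remove v => 0 < occ S t v
    | .slide u v => G.Adj u v ∧ 0 < occ S t u

/-- An internal schedule never removes searchers from the graph. -/
def Internal (S : ℕ → GMove V) : Prop := ∀ t v, S t ≠ GMove.remove v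

/-- A rooted schedule places searchers only at the root `r`. -/
def RootedAt (S : ℕ → GMove V) (r : V) : Prop := ∀ t v, S t = GMove.place v → v = r

/-- The set of n-dirty nodes of the node game: initially all nodes are n-dirty;
after a move, a node is n-dirty iff it is joined to a previously n-dirty node by a
path all of whose nodes are unguarded. -/
def ndirty (G : SimpleGraph V) (S : ℕ → GMove V) : ℕ → Set V
  | 0 => Set.univ
  | t + 1 =>
    { u | ∃ w, w ∈ ndirty G S t ∧ ∃ p : G.Walk u w, ∀ x ∈ p.support, occ S (t + 1) x = 0 }

/-- The set of n-dirty edges: edges incident to an n-dirty node. -/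
def nEdgeDirty (G : SimpleGraph V) (S : ℕ → GMove V) (t : ℕ) : Set (Sym2 V) :=
  { e | e ∈ G.edgeSet ∧ ∃ v ∈ e, v ∈ ndirty G S t }

/-- The set of e-dirty edges of the edge game: initially all edges are e-dirty;
a traversed edge is cleared, and an edge is recontaminated when joined to a
(still) e-dirty edge by a path whose interior nodes are unguarded. -/
def edirty (G : SimpleGraph V) (S : ℕ → GMove V) : ℕ → Set (Sym2 V)
  | 0 => G.edgeSet
  | t + 1 =>
    (edirty G S t \ { e | (S t).traversed = some e }) ∪
      { e | ∃ x y q q', e = s(x, y) ∧ G.Adj x y ∧ G.Adj q q' ∧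
          (s(q, q') ∈ edirty G S t ∧ (S t).traversed ≠ some s(q, q')) ∧
          ∃ p : G.Walk y q, ∀ z ∈ p.support, occ S (t + 1) z = 0 }

/-- A node is e-dirty iff it is unguarded and adjacent to an e-dirty edge. -/
def edirtyNode (G : SimpleGraph V) (S : ℕ → GMove V) (t : ℕ) : Set V :=
  { v | occ S t v = 0 ∧ ∃ e ∈ edirty G S t, v ∈ e }

/-- The set of m-dirty edges of the mixed edge game: as in the edge game, but in
addition an edge both of whose endpoints are guarded becomes m-clear. -/
def mdirty (G : SimpleGraph V) (S : ℕ → GMove V) : ℕ → Set (Sym2 V)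
  | 0 => G.edgeSet
  | t + 1 =>
    (mdirty G S t \
        ({ e | (S t).traversed = some e } ∪ { e | ∀ v ∈ e, 0 < occ S (t + 1) v })) ∪
      { e | ∃ x y q q', e = s(x, y) ∧ G.Adj x y ∧ G.Adj q q' ∧
          (s(q, q') ∈ mdirty G S t ∧ (S t).traversed ≠ some s(q, q') ∧
            ¬ (∀ v ∈ (s(q, q') : Sym2 V), 0 < occ S (t + 1) v)) ∧
          ∃ p : G.Walk y q, ∀ z ∈ p.support, occ S (t + 1) z = 0 }

/-- A node is m-dirty iff it is unguarded and adjacent to an m-dirty edge. -/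
def mdirtyNode (G : SimpleGraph V) (S : ℕ → GMove V) (t : ℕ) : Set V :=
  { v | occ S t v = 0 ∧ ∃ e ∈ mdirty G S t, v ∈ e }

/-- The n-clear subgraph: n-clear nodes and all edges of `G` between them. -/
def nclearSubgraph (G : SimpleGraph V) (S : ℕ → GMove V) (t : ℕ) : G.Subgraph where
  verts := (ndirty G S t)ᶜ
  Adj a b := G.Adj a b ∧ a ∉ ndirty G S t ∧ b ∉ ndirty G S t
  adj_sub h := h.1
  edge_vert h := h.2.1
  symm := ⟨fun a b h => ⟨h.1.symm, h.2.2, h.2.1⟩⟩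

/-- The e-clear subgraph: e-clear nodes and e-clear edges. -/
def eclearSubgraph (G : SimpleGraph V) (S : ℕ → GMove V) (t : ℕ) : G.Subgraph where
  verts := { v | v ∉ edirtyNode G S t } ∪ { v | ∃ e ∈ G.edgeSet \ edirty G S t, v ∈ e }
  Adj a b := G.Adj a b ∧ s(a, b) ∈ G.edgeSet \ edirty G S t
  adj_sub h := h.1
  edge_vert {a b} h := Or.inr ⟨s(a, b), h.2, Sym2.mem_mk_left a b⟩
  symm := ⟨fun a b h => ⟨h.1.symm, by rw [Sym2.eq_swap]; exact h.2⟩⟩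

lemma exists_nbr {V : Type*} (G : SimpleGraph V) (hconn : G.Connected)
    (hne : G.edgeSet.Nonempty) (v : V) : ∃ u, G.Adj v u := by
  obtain ⟨e, he⟩ := hne
  induction e using Sym2.ind with
  | _ x y =>
    rw [SimpleGraph.mem_edgeSet _] at he
    by_cases hvx : v = x
    · exact ⟨y, hvx ▸ he⟩
    · obtain ⟨p⟩ := hconn v x
      cases p with
      | nil => exact absurd rfl hvx
      | cons h _ => exact ⟨_, h⟩

lemma key {V : Type*} (G : SimpleGraph V) (hconn : G.Connected)
    (hne : G.edgeSet.Nonempty) (S : ℕ → GMove V) (hL : Legal G S) :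
    ∀ t, ∀ v ∈ ndirty G S t,
      occ S t v = 0 ∧ ∀ e ∈ G.edgeSet, v ∈ e → e ∈ edirty G S t := by
  intro t
  induction t with
  | zero => intro v _; exact ⟨rfl, fun e he _ => he⟩
  | succ t ih =>
    intro v hv
    simp only [ndirty, Set.mem_setOf_eq] at hv
    obtain ⟨w, hw, p, hp⟩ := hv
    refine ⟨hp v p.start_mem_support, ?_⟩
    intro e heE hve
    obtain ⟨v', rfl⟩ := Sym2.mem_iff_exists.1 hve
    rw [SimpleGraph.mem_edgeSet _] at heE
    obtain ⟨hw0, hwE⟩ := ih w hw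
    obtain ⟨q', hq'⟩ := exists_nbr G hconn hne w
    have hdirty : s(w, q') ∈ edirty G S t :=
      hwE _ ((SimpleGraph.mem_edgeSet _).2 hq') (Sym2.mem_mk_left _ _)
    have hnotrav : (S t).traversed ≠ some s(w, q') := by
      rcases hSt : S t with ⟨a⟩ | ⟨a⟩ | ⟨a, b⟩
      · simp [GMove.traversed]
      · simp [GMove.traversed]
      · simp only [GMove.traversed]
        intro hcon
        have hab : s(a, b) = s(w, q') := Option.some.inj hcon
        have hLt := hL t
        rw [hSt] at hLt
        have hwa : w ≠ a := by
          intro h; rw [← h] at hLt; omega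
        have hwb : w ≠ b := by
          have h1 : occ S (t + 1) w = 0 := hp w p.end_mem_support
          intro h
          have h2 : occ S (t + 1) b = occ S t b + 1 := by
            simp [occ, hSt]
          rw [h, h2] at h1
          omega
        rcases Sym2.eq_iff.1 hab with ⟨h1, h2⟩ | ⟨h1, h2⟩
        · exact hwa h1.symm
        · exact hwb h2.symm
    rw [edirty]
    exact Set.mem_union_right _
      ⟨v', v, w, q', Sym2.eq_swap, heE.symm, hq', ⟨hdirty, hnotrav⟩, p, hp⟩

/-- For every search schedule and every time `t`, the set of e-clear nodes is
contained in the set of n-clear nodes and the set of e-clear edges is contained in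
the set of n-clear edges: the node game dominates the edge game. -/
theorem stmt3 {V : Type*} (G : SimpleGraph V) (hconn : G.Connected)
    (hne : G.edgeSet.Nonempty) (S : ℕ → GMove V) (hL : Legal G S) :
    ∀ t : ℕ, { v | v ∉ edirtyNode G S t } ⊆ { v | v ∉ ndirty G S t } ∧
      G.edgeSet \ edirty G S t ⊆ G.edgeSet \ nEdgeDirty G S t := by
  intro t
  constructor
  · intro v hv hvnd
    apply hv
    obtain ⟨h0, hE⟩ := key G hconn hne S hL t v hvnd
    obtain ⟨u, hu⟩ := exists_nbr G hconn hne v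
    exact ⟨h0, s(v, u), hE _ ((SimpleGraph.mem_edgeSet _).2 hu) (Sym2.mem_mk_left _ _),
      Sym2.mem_mk_left _ _⟩
  · rintro e ⟨heE, hed⟩
    refine ⟨heE, fun hnd => hed ?_⟩
    obtain ⟨_, v, hve, hvnd⟩ := hnd
    exact (key G hconn hne S hL t v hvnd).2 e heE hve
end

section
/- Given a graph G and an internal search schedule S, if S clears all edges in the edge game then S also clears all nodes (and edges) in the node game. -/
open SimpleGraph

variable {V : Type*}

lemma edirty_subset_edgeSet (G : SimpleGraph V) (S : ℕ → GMove V) :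
    ∀ t, edirty G S t ⊆ G.edgeSet := by
  intro t
  induction t with
  | zero => simp [edirty]
  | succ t ih =>
    intro e he
    rcases he with h | h
    · exact ih h.1
    · obtain ⟨x, y, q, q', rfl, hxy, _⟩ := h
      exact hxy

lemma exists_neighbor (G : SimpleGraph V) (hconn : G.Connected)
    (hne : G.edgeSet.Nonempty) (u : V) : ∃ w, G.Adj u w := by
  obtain ⟨e, he⟩ := hne
  induction e using Sym2.ind with
  | _ a b =>
    rw [SimpleGraph.mem_edgeSet] at he
    by_cases hua : u = a
    · exact ⟨b, hua ▸ he⟩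
    · obtain ⟨p⟩ := hconn u a
      cases p with
      | nil => exact absurd rfl hua
      | cons hadj _ => exact ⟨_, hadj⟩

lemma ndirty_subset_edirtyNode (G : SimpleGraph V) (hconn : G.Connected)
    (hne : G.edgeSet.Nonempty) (S : ℕ → GMove V) (hL : Legal G S) :
    ∀ t, ndirty G S t ⊆ edirtyNode G S t := by
  intro t
  induction t with
  | zero =>
    intro v _
    obtain ⟨n, hn⟩ := exists_neighbor G hconn hne v
    exact ⟨rfl, s(v, n), hn, Sym2.mem_mk_left _ _⟩
  | succ t ih =>
    rintro u ⟨w, hw, p, hp⟩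
    obtain ⟨hw0, e, he, hwe⟩ := ih hw
    obtain ⟨z, rfl⟩ := Sym2.mem_iff_exists.mp hwe
    have hAdj : G.Adj w z := edirty_subset_edgeSet G S t he
    have hu0 : occ S (t + 1) u = 0 := hp u p.start_mem_support
    have hwp : occ S (t + 1) w = 0 := hp w p.end_mem_support
    have htrav : (S t).traversed ≠ some s(w, z) := by
      intro hT
      cases hS : S t with
      | place v => simp [hS, GMove.traversed] at hT
      | remove v => simp [hS, GMove.traversed] at hT
      | slide a b =>
        rw [hS] at hT
        simp only [GMove.traversed, Option.some_inj] at hT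
        have hleg : G.Adj a b ∧ 0 < occ S t a := by
          have hl := hL t
          rw [hS] at hl
          exact hl
        have hb : 0 < occ S (t + 1) b := by
          simp [occ, hS]
        rcases Sym2.eq_iff.mp hT with ⟨rfl, rfl⟩ | ⟨rfl, rfl⟩
        · rw [hw0] at hleg
          exact lt_irrefl 0 hleg.2
        · rw [hwp] at hb
          exact lt_irrefl 0 hb
    obtain ⟨n, hn⟩ := exists_neighbor G hconn hne u
    exact ⟨hu0, s(n, u),
      Or.inr ⟨n, u, w, z, rfl, hn.symm, hAdj, ⟨he, htrav⟩, p, hp⟩,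
      Sym2.mem_mk_right _ _⟩

/-- If an internal search schedule clears all edges in the edge game, then it also
clears all nodes (and all edges) in the node game. -/
theorem stmt4 {V : Type*} (G : SimpleGraph V) (hconn : G.Connected)
    (hne : G.edgeSet.Nonempty) (S : ℕ → GMove V) (hL : Legal G S) (hI : Internal S)
    (T : ℕ) (h : edirty G S T = ∅) :
    ndirty G S T = ∅ ∧ nEdgeDirty G S T = ∅ := by
  have h1 : ndirty G S T = ∅ := by
    rw [Set.eq_empty_iff_forall_notMem]
    intro v hv
    obtain ⟨_, e, he, _⟩ := ndirty_subset_edirtyNode G hconn hne S hL T hv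
    rw [h] at he
    exact he
  refine ⟨h1, ?_⟩
  ext e
  simp [nEdgeDirty, h1]
end

section
/- Let T be a tree and S an internal rooted search schedule on T. If S is monotone and connected in the node game, then at every time step the e-clear node set equals the n-clear node set and the e-clear edge set equals the n-clear edge set; consequently S is also monotone and connected in the edge game. -/
open SimpleGraph

variable {V : Type*}

section Aux

variable {G : SimpleGraph V} {S : ℕ → GMove V}

open Classical in
lemma occ_succ (S : ℕ → GMove V) (t : ℕ) (x : V) :
    occ S (t + 1) x = match S t with
    | .place v => if x = v then occ S t x + 1 else occ S t x
    | .remove v => if x = v then occ S t x - 1 else occ S t x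
    | .slide u v =>
        if x = v then occ S t x + 1 else if x = u then occ S t x - 1 else occ S t x := rfl

/-- A node that is n-dirty at a positive time is unguarded. -/
lemma occ_zero_of_ndirty : ∀ {t : ℕ} {v : V}, v ∈ ndirty G S t → occ S t v = 0
  | 0, _, _ => rfl
  | t + 1, v, hv => by
    obtain ⟨w, _, p, hp⟩ := hv
    exact hp v p.start_mem_support

/-- If all nodes are n-dirty, nobody is on the graph. -/
lemma occ_all_zero_of_ndirty_univ {t : ℕ} (h : ndirty G S t = Set.univ) (v : V) :
    occ S t v = 0 :=
  occ_zero_of_ndirty (h ▸ Set.mem_univ v)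

/-- A node that was n-dirty and is unguarded stays n-dirty. -/
lemma ndirty_succ_self {t : ℕ} {v : V} (hv : v ∈ ndirty G S t)
    (h0 : occ S (t + 1) v = 0) : v ∈ ndirty G S (t + 1) :=
  ⟨v, hv, SimpleGraph.Walk.nil, by
    intro x hx
    simp only [SimpleGraph.Walk.support_nil, List.mem_singleton] at hx
    subst hx; exact h0⟩

/-- Extending n-dirtiness along an unguarded walk. -/
lemma ndirty_succ_of_walk {t : ℕ} {v u : V} (p : G.Walk v u)
    (hp : ∀ x ∈ p.support, occ S (t + 1) x = 0)
    (hu : u ∈ ndirty G S (t + 1)) : v ∈ ndirty G S (t + 1) := by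
  obtain ⟨w, hw, q, hq⟩ := hu
  refine ⟨w, hw, p.append q, fun x hx => ?_⟩
  rcases (SimpleGraph.Walk.mem_support_append_iff _ _).mp hx with h | h
  · exact hp x h
  · exact hq x h

/-- If `occ` became positive, the move entered that node. -/
lemma move_entered (hI : Internal S) {t : ℕ} {v : V} (h0 : occ S t v = 0)
    (h1 : 0 < occ S (t + 1) v) :
    S t = GMove.place v ∨ ∃ u, S t = GMove.slide u v := by
  classical
  have h1' := h1
  rw [occ_succ] at h1'
  rcases hS : S t with w | w | ⟨u, w⟩ <;> rw [hS] at h1'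
  · by_cases hvw : v = w
    · exact Or.inl (by rw [hvw])
    · simp [hvw, h0] at h1'
  · exact absurd hS (hI t w)
  · by_cases hvw : v = w
    · exact Or.inr ⟨u, by rw [hvw]⟩
    · have h2 : 0 < if v = w then occ S t v + 1
          else if v = u then occ S t v - 1 else occ S t v := h1'
      rw [if_neg hvw] at h2
      by_cases hvu : v = u
      · rw [if_pos hvu, h0] at h2
        simp at h2
      · rw [if_neg hvu, h0] at h2
        exact absurd h2 (lt_irrefl 0)

/-- The root can only be n-dirty as long as everything is n-dirty. -/
lemma root_clear (hL : Legal G S) (hI : Internal S) {r : V} (hR : RootedAt S r)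
    (hMN : ∀ t : ℕ, ndirty G S (t + 1) ⊆ ndirty G S t) :
    ∀ t : ℕ, r ∉ ndirty G S t ∨ ndirty G S t = Set.univ := by
  intro t
  induction t with
  | zero => exact Or.inr rfl
  | succ t ih =>
    rcases ih with ih | ih
    · exact Or.inl fun h => ih (hMN t h)
    · left
      intro hr
      have h0 : occ S (t + 1) r = 0 := occ_zero_of_ndirty hr
      have hall : ∀ v, occ S t v = 0 := occ_all_zero_of_ndirty_univ ih
      have hLt := hL t
      rcases hS : S t with w | w | ⟨u, w⟩
      · have hw : w = r := hR t w hS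
        rw [occ_succ, hS, hw] at h0
        simp at h0
      · exact hI t w hS
      · rw [hS] at hLt
        have h2 : G.Adj u w ∧ 0 < occ S t u := hLt
        rw [hall u] at h2
        exact absurd h2.2 (lt_irrefl 0)

/-- Every vertex of a connected graph with an edge has a neighbour. -/
lemma exists_adj (hT : G.IsTree) (hne : G.edgeSet.Nonempty) (v : V) :
    ∃ w, G.Adj v w := by
  obtain ⟨e, he⟩ := hne
  induction e using Sym2.ind with
  | _ a b =>
    rw [SimpleGraph.mem_edgeSet] at he
    by_cases hva : v = a
    · exact ⟨b, hva ▸ he⟩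
    · obtain ⟨p⟩ := hT.isConnected.preconnected v a
      cases p with
      | nil => exact absurd rfl hva
      | cons h _ => exact ⟨_, h⟩

/-- In a tree, every walk between two distinct neighbours of `c` passes through `c`. -/
lemma tree_sep (hT : G.IsTree) {u q c : V} (hu : G.Adj u c) (hq : G.Adj q c)
    (huq : u ≠ q) (p : G.Walk u q) : c ∈ p.support := by
  classical
  by_contra hc
  have hc' : c ∉ (p.toPath : G.Walk u q).support :=
    fun h => hc (SimpleGraph.Walk.support_toPath_subset p h)
  have hW1 : (SimpleGraph.Walk.cons hu.symm (p.toPath : G.Walk u q)).IsPath :=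
    (p.toPath.2).cons hc'
  have hW2 : (SimpleGraph.Walk.cons hq.symm SimpleGraph.Walk.nil).IsPath := by
    simp [SimpleGraph.Walk.isPath_def, hq.ne']
  have := (hT.existsUnique_path c q).unique hW1 hW2
  have hsupp := congrArg SimpleGraph.Walk.support this
  simp only [SimpleGraph.Walk.support_cons, SimpleGraph.Walk.support_nil] at hsupp
  have hu' : u ∈ (p.toPath : G.Walk u q).support := SimpleGraph.Walk.start_mem_support _
  rw [List.cons_eq_cons] at hsupp
  have : u ∈ [q] := hsupp.2 ▸ hu'
  simp at this
  exact huq this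

/-- Connectivity of the n-clear subgraph forbids two distinct clear neighbours of a
dirty node. -/
lemma sep_contra (hT : G.IsTree)
    (hCN : ∀ t : ℕ, 1 ≤ t → (nclearSubgraph G S t).Connected)
    {t : ℕ} (ht : 1 ≤ t) {a b c : V}
    (ha : a ∉ ndirty G S t) (hb : b ∉ ndirty G S t) (hab : a ≠ b)
    (hac : G.Adj a c) (hbc : G.Adj b c) (hc : c ∈ ndirty G S t) : False := by
  have hconn := (hCN t ht).coe
  obtain ⟨w⟩ := hconn.preconnected
    ⟨a, (by exact ha : a ∈ (nclearSubgraph G S t).verts)⟩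
    ⟨b, (by exact hb : b ∈ (nclearSubgraph G S t).verts)⟩
  have hcw : c ∈ (w.map (nclearSubgraph G S t).hom).support :=
    tree_sep hT hac hbc hab _
  rw [SimpleGraph.Walk.support_map] at hcw
  obtain ⟨d, _, hd⟩ := List.mem_map.mp hcw
  have : c ∈ (nclearSubgraph G S t).verts := by rw [← hd]; exact d.property
  exact this hc

/-- The key invariant: e-dirty edges coincide with n-dirty edges. -/
lemma edge_eq (hT : G.IsTree) (hne : G.edgeSet.Nonempty)
    (hL : Legal G S) (hI : Internal S) {r : V} (hR : RootedAt S r)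
    (hMN : ∀ t : ℕ, ndirty G S (t + 1) ⊆ ndirty G S t)
    (hCN : ∀ t : ℕ, 1 ≤ t → (nclearSubgraph G S t).Connected) :
    ∀ t : ℕ, edirty G S t = nEdgeDirty G S t := by
  intro t
  induction t with
  | zero =>
    ext e
    induction e using Sym2.ind with
    | _ a b => simp [edirty, nEdgeDirty, ndirty]
  | succ t ih =>
    apply Set.eq_of_subset_of_subset
    · -- e-dirty ⊆ n-dirty
      rintro e (⟨heod, hetr⟩ | ⟨x, y, q, q', hexy, hxy, hqq', ⟨hqd, hqtr⟩, p, hp⟩)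
      · -- remaining dirty edge, not traversed
        rw [ih] at heod
        obtain ⟨heE, v, hve, hvd⟩ := heod
        simp only [Set.mem_setOf_eq] at hetr
        obtain ⟨x, hex⟩ := Sym2.mem_iff_exists.mp hve
        subst hex
        have hxy : G.Adj v x := (SimpleGraph.mem_edgeSet G).mp heE
        refine ⟨heE, ?_⟩
        -- v is dirty at time t; show v or x dirty at t+1
        have hv0 : occ S t v = 0 := occ_zero_of_ndirty hvd
        by_cases hv1 : occ S (t + 1) v = 0
        · exact ⟨v, Sym2.mem_mk_left _ _, ndirty_succ_self hvd hv1⟩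
        · -- the move entered v
          rcases move_entered hI hv0 (Nat.pos_of_ne_zero hv1) with hS | ⟨u, hS⟩
          · -- place at v : v = r
            have hvr : v = r := hR t v hS
            rcases root_clear hL hI hR hMN t with hrc | huniv
            · exact absurd (hvr ▸ hvd) hrc
            · -- all dirty at t; x is dirty and unguarded at t+1
              have hxd : x ∈ ndirty G S t := huniv ▸ Set.mem_univ x
              have hx1 : occ S (t + 1) x = 0 := by
                rw [occ_succ, hS]
                simp [hxy.ne', occ_all_zero_of_ndirty_univ huniv x]
              exact ⟨x, Sym2.mem_mk_right _ _, ndirty_succ_self hxd hx1⟩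
          · -- slide u → v; u ≠ x since the traversed edge is not e
            have hux : u ≠ x := by
              rintro rfl
              exact hetr (by rw [hS]; simp [GMove.traversed, Sym2.eq_swap])
            have hLt := hL t
            rw [hS] at hLt
            obtain ⟨huv, hupos⟩ := hLt
            -- t ≥ 1, u guarded hence clear at t
            rcases Nat.eq_zero_or_pos t with rfl | ht
            · exact absurd hupos (lt_irrefl 0)
            · have hu_clear : u ∉ ndirty G S t :=
                fun h => (occ_zero_of_ndirty h ▸ hupos).false
              by_cases hxd : x ∈ ndirty G S t
              · -- x dirty and untouched by the move
                have hx1 : occ S (t + 1) x = 0 := by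
                  rw [occ_succ, hS]
                  simp [hxy.ne', Ne.symm hux, occ_zero_of_ndirty hxd]
                exact ⟨x, Sym2.mem_mk_right _ _, ndirty_succ_self hxd hx1⟩
              · exact absurd (sep_contra hT hCN ht hu_clear hxd hux huv hxy.symm hvd)
                  not_false
      · -- recontaminated edge
        subst hexy
        refine ⟨hxy, y, Sym2.mem_mk_right _ _, ?_⟩
        rw [ih] at hqd
        obtain ⟨hqE, v, hvq, hvd⟩ := hqd
        by_cases hyd : y ∈ ndirty G S t
        · exact ndirty_succ_self hyd (hp y p.start_mem_support)
        rcases Sym2.mem_iff.mp hvq with rfl | rfl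
        · -- q itself is dirty at t
          exact ⟨v, hvd, p, hp⟩
        · -- q' dirty at t
          by_cases hqd' : q ∈ ndirty G S t
          · exact ⟨q, hqd', p, hp⟩
          have hq'0 : occ S t v = 0 := occ_zero_of_ndirty hvd
          by_cases hq'1 : occ S (t + 1) v = 0
          · -- extend the walk by the edge q q'
            refine ⟨v, hvd, p.append (SimpleGraph.Walk.cons hqq' SimpleGraph.Walk.nil),
              fun x hx => ?_⟩
            rcases (SimpleGraph.Walk.mem_support_append_iff _ _).mp hx with h | h
            · exact hp x h
            · simp only [SimpleGraph.Walk.support_cons, SimpleGraph.Walk.support_nil,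
                List.mem_cons, List.mem_singleton] at h
              rcases h with rfl | rfl | h
              · exact hp x p.end_mem_support
              · exact hq'1
              · simp at h
          · -- the move entered q'
            rcases move_entered hI hq'0 (Nat.pos_of_ne_zero hq'1) with hS | ⟨u, hS⟩
            · have hvr : v = r := hR t v hS
              rcases root_clear hL hI hR hMN t with hrc | huniv
              · exact absurd (hvr ▸ hvd) hrc
              · exact absurd (huniv ▸ Set.mem_univ q) hqd'
            · have huq : u ≠ q := by
                rintro rfl
                exact hqtr (by rw [hS]; simp [GMove.traversed])
              have hLt := hL t
              rw [hS] at hLt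
              obtain ⟨huv, hupos⟩ := hLt
              rcases Nat.eq_zero_or_pos t with rfl | ht
              · exact absurd hupos (lt_irrefl 0)
              · have hu_clear : u ∉ ndirty G S t :=
                  fun h => (occ_zero_of_ndirty h ▸ hupos).false
                exact absurd (sep_contra hT hCN ht hu_clear hqd' huq huv hqq' hvd)
                  not_false
    · -- n-dirty ⊆ e-dirty
      rintro e ⟨heE, v, hve, hvd⟩
      obtain ⟨w, hwd, p, hp⟩ := hvd
      obtain ⟨b, heb⟩ := Sym2.mem_iff_exists.mp hve
      subst heb
      obtain ⟨w', hww'⟩ := exists_adj hT hne w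
      right
      refine ⟨b, v, w, w', Sym2.eq_swap, ((SimpleGraph.mem_edgeSet G).mp heE).symm,
        hww', ⟨?_, ?_⟩, p, hp⟩
      · rw [ih]
        exact ⟨(SimpleGraph.mem_edgeSet G).mpr hww', w, Sym2.mem_mk_left _ _, hwd⟩
      · -- the traversed edge is not s(w, w')
        have hw0 : occ S t w = 0 := occ_zero_of_ndirty hwd
        have hw1 : occ S (t + 1) w = 0 := hp w p.end_mem_support
        rcases hS : S t with z | z | ⟨a, c⟩
        · simp [GMove.traversed]
        · simp [GMove.traversed]
        · have hLt : G.Adj a c ∧ 0 < occ S t a := by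
            have h := hL t; rw [hS] at h; exact h
          intro htr
          simp only [GMove.traversed, Option.some.injEq] at htr
          rcases Sym2.eq_iff.mp htr with ⟨rfl, rfl⟩ | ⟨rfl, rfl⟩
          · simp [hw0] at hLt
          · rw [occ_succ, hS] at hw1
            simp at hw1

/-- The e-dirty nodes coincide with the n-dirty nodes. -/
lemma node_eq (hT : G.IsTree) (hne : G.edgeSet.Nonempty)
    (hL : Legal G S) (hI : Internal S) {r : V} (hR : RootedAt S r)
    (hMN : ∀ t : ℕ, ndirty G S (t + 1) ⊆ ndirty G S t)
    (hCN : ∀ t : ℕ, 1 ≤ t → (nclearSubgraph G S t).Connected) :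
    ∀ t : ℕ, edirtyNode G S t = ndirty G S t := by
  intro t
  have hE := edge_eq hT hne hL hI hR hMN hCN t
  apply Set.eq_of_subset_of_subset
  · rintro v ⟨hv0, e, hed, hve⟩
    rw [hE] at hed
    obtain ⟨heE, u, hue, hud⟩ := hed
    obtain ⟨b, heb⟩ := Sym2.mem_iff_exists.mp hve
    subst heb
    rcases Sym2.mem_iff.mp hue with rfl | rfl
    · exact hud
    · -- the other endpoint is dirty; absorb v
      cases t with
      | zero => exact Set.mem_univ v
      | succ t =>
        have hadj : G.Adj v u := (SimpleGraph.mem_edgeSet G).mp heE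
        refine ndirty_succ_of_walk (SimpleGraph.Walk.cons hadj SimpleGraph.Walk.nil)
          ?_ hud
        intro x hx
        simp only [SimpleGraph.Walk.support_cons, SimpleGraph.Walk.support_nil,
          List.mem_cons, List.mem_singleton] at hx
        rcases hx with rfl | rfl | hx
        · exact hv0
        · exact occ_zero_of_ndirty hud
        · simp at hx
  · intro v hvd
    obtain ⟨w, hvw⟩ := exists_adj hT hne v
    exact ⟨occ_zero_of_ndirty hvd,
      s(v, w), hE ▸ ⟨(SimpleGraph.mem_edgeSet G).mpr hvw, v, Sym2.mem_mk_left _ _, hvd⟩,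
      Sym2.mem_mk_left _ _⟩

end Aux

/-- On a tree, an internal rooted search schedule that is monotone and connected in
the node game has, at every time, e-clear node/edge sets equal to the n-clear
node/edge sets; consequently it is also monotone and connected in the edge game. -/
theorem stmt5 {V : Type*} (G : SimpleGraph V) (hT : G.IsTree)
    (hne : G.edgeSet.Nonempty) (S : ℕ → GMove V) (hL : Legal G S) (hI : Internal S)
    (r : V) (hR : RootedAt S r)
    (hMN : ∀ t : ℕ, ndirty G S (t + 1) ⊆ ndirty G S t)
    (hCN : ∀ t : ℕ, 1 ≤ t → (nclearSubgraph G S t).Connected) :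
    (∀ t : ℕ, { v | v ∉ edirtyNode G S t } = (ndirty G S t)ᶜ ∧
        G.edgeSet \ edirty G S t = G.edgeSet \ nEdgeDirty G S t) ∧
    (∀ t : ℕ, edirty G S (t + 1) ⊆ edirty G S t) ∧
    (∀ t : ℕ, 1 ≤ t → (eclearSubgraph G S t).Connected) := by
  have hE := edge_eq hT hne hL hI hR hMN hCN
  have hN := node_eq hT hne hL hI hR hMN hCN
  have hVerts : ∀ t : ℕ, { v | v ∉ edirtyNode G S t } = (ndirty G S t)ᶜ := by
    intro t
    rw [hN t]; rfl
  have hsub : ∀ t : ℕ, eclearSubgraph G S t = nclearSubgraph G S t := by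
    intro t
    apply SimpleGraph.Subgraph.ext
    · show _ ∪ _ = _
      rw [hVerts t]
      apply Set.union_eq_self_of_subset_right
      rintro v ⟨e, ⟨heE, hed⟩, hve⟩
      rw [hE t] at hed
      exact fun hvd => hed ⟨heE, v, hve, hvd⟩
    · ext a b
      show G.Adj a b ∧ s(a, b) ∈ G.edgeSet \ edirty G S t ↔
        G.Adj a b ∧ a ∉ ndirty G S t ∧ b ∉ ndirty G S t
      rw [hE t]
      constructor
      · rintro ⟨hadj, _, hed⟩
        exact ⟨hadj, fun h => hed ⟨(SimpleGraph.mem_edgeSet G).mpr hadj, a, Sym2.mem_mk_left _ _, h⟩,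
          fun h => hed ⟨(SimpleGraph.mem_edgeSet G).mpr hadj, b, Sym2.mem_mk_right _ _, h⟩⟩
      · rintro ⟨hadj, ha, hb⟩
        refine ⟨hadj, (SimpleGraph.mem_edgeSet G).mpr hadj, ?_⟩
        rintro ⟨_, v, hv, hvd⟩
        rcases Sym2.mem_iff.mp hv with rfl | rfl
        · exact ha hvd
        · exact hb hvd
  refine ⟨fun t => ⟨hVerts t, by rw [hE t]⟩, fun t => ?_, fun t ht => ?_⟩
  · rw [hE t, hE (t + 1)]
    rintro e ⟨heE, v, hve, hvd⟩
    exact ⟨heE, v, hve, hMN t hvd⟩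
  · rw [hsub t]
    exact hCN t ht
end

section
/- Every rooted internal monotone connected node-clearing search S of a graph G with N nodes generates a nested sequence of trees T_0 ⊆ T_1 ⊆ ... ⊆ T_N where T_0 is empty, T_N is a spanning tree of G, and for each n the tree T_n is obtained from T_{n-1} by adding exactly one new node u_n and (for n ≥ 2) exactly one edge connecting u_n to a node of T_{n-1}. -/
open SimpleGraph

variable {V : Type*}

section Aux

variable {G : SimpleGraph V} {S : ℕ → GMove V}

lemma occ_zero_of_mem_ndirty : ∀ {t : ℕ} {x : V}, x ∈ ndirty G S t → occ S t x = 0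
  | 0, _, _ => rfl
  | t + 1, x, h => by
    obtain ⟨w, _, p, hp⟩ := h
    exact hp x p.start_mem_support

lemma mem_ndirty_succ {t : ℕ} {x : V} (hx : x ∈ ndirty G S t) (h0 : occ S (t + 1) x = 0) :
    x ∈ ndirty G S (t + 1) :=
  ⟨x, hx, Walk.nil, fun z hz => by
    rw [Walk.support_nil, List.mem_singleton] at hz; rwa [hz]⟩

lemma target_of_cleared {t : ℕ} {x : V} (hx : x ∈ ndirty G S t)
    (hx' : x ∉ ndirty G S (t + 1)) : (S t).target = some x := by
  have h1 : occ S t x = 0 := occ_zero_of_mem_ndirty hx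
  have h2 : occ S (t + 1) x ≠ 0 := fun h => hx' (mem_ndirty_succ hx h)
  simp only [occ] at h2
  cases hS : S t with
  | place v =>
    rw [hS] at h2
    simp only [GMove.target]
    by_cases hxv : x = v
    · rw [hxv]
    · simp only [if_neg hxv] at h2; exact absurd h1 h2
  | remove v =>
    rw [hS] at h2
    by_cases hxv : x = v
    · simp only [if_pos hxv, h1] at h2; exact absurd rfl h2
    · simp only [if_neg hxv] at h2; exact absurd h1 h2
  | slide u v =>
    rw [hS] at h2
    simp only [GMove.target]
    by_cases hxv : x = v
    · rw [hxv]
    · by_cases hxu : x = u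
      · simp only [if_neg hxv, if_pos hxu, h1] at h2; exact absurd rfl h2
      · simp only [if_neg hxv, if_neg hxu] at h2; exact absurd h1 h2

lemma cleared_subsingleton (t : ℕ) :
    (ndirty G S t \ ndirty G S (t + 1)).Subsingleton := by
  intro x hx y hy
  have h1 := target_of_cleared hx.1 hx.2
  have h2 := target_of_cleared hy.1 hy.2
  rw [h1] at h2
  exact Option.some.inj h2

/-- No cycle passes through a vertex with at most one neighbour. -/
lemma no_cycle_through {W : Type*} {G' : SimpleGraph W} {x : W}
    (hx : ∀ ⦃y z : W⦄, G'.Adj x y → G'.Adj x z → y = z) :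
    ∀ {v : W} {c : G'.Walk v v}, c.IsCycle → x ∉ c.support := by
  have key : ∀ (b : W) (h1 : G'.Adj x b) (q : G'.Walk b x), ¬ (Walk.cons h1 q).IsCycle := by
    intro b h1 q hcy
    rw [Walk.cons_isCycle_iff] at hcy
    obtain ⟨hq, hne⟩ := hcy
    cases hqr : q.reverse with
    | nil =>
      have : q = Walk.nil.reverse := by rw [← hqr, Walk.reverse_reverse]
      rw [Walk.reverse_nil] at this
      subst this
      exact G'.loopless.irrefl x h1
    | cons h2 q2 =>
      rename_i d
      have hbd : b = d := hx h1 h2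
      apply hne
      have : s(x, d) ∈ q.reverse.edges := by rw [hqr, Walk.edges_cons]; exact List.mem_cons_self
      rw [Walk.edges_reverse, List.mem_reverse] at this
      rwa [← hbd] at this
  intro v c hc hmem
  classical
  have hc' := hc.rotate hmem
  cases hrot : c.rotate _ hmem with
  | nil => rw [hrot] at hc'; exact hc'.ne_nil rfl
  | cons h1 q => rw [hrot] at hc'; exact key _ h1 q hc'

end Aux

/-- Every rooted internal monotone connected node-clearing search of a graph `G`
with `N` nodes generates a nested sequence of trees `T₀ ⊆ T₁ ⊆ ⋯ ⊆ T_N`: `T₀` is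
empty, `T_N` is a spanning tree of `G`, each `Tₙ` adds exactly one new node (the
`n`-th node cleared, so the vertex sets are the successive n-clear sets) and, for
`n ≥ 2`, exactly one edge joining the new node to a node of `T_{n-1}`. -/
theorem stmt8 {V : Type*} [Fintype V] (G : SimpleGraph V) (S : ℕ → GMove V)
    (hL : Legal G S) (hI : Internal S) (r : V) (hR : RootedAt S r)
    (hM : ∀ t : ℕ, ndirty G S (t + 1) ⊆ ndirty G S t)
    (hC : ∀ t : ℕ, 1 ≤ t → (nclearSubgraph G S t).Connected)
    (Tf : ℕ) (hclear : ndirty G S Tf = ∅) :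
    ∃ (H : ℕ → G.Subgraph) (τ : ℕ → ℕ),
      H 0 = ⊥ ∧
      (∀ n, 1 ≤ n → n ≤ Fintype.card V → (H n).coe.IsTree) ∧
      (H (Fintype.card V)).verts = Set.univ ∧
      (∀ n, 1 ≤ n → n ≤ Fintype.card V → H (n - 1) ≤ H n) ∧
      (∀ n, 1 ≤ n → n ≤ Fintype.card V →
        ∃ u, u ∉ (H (n - 1)).verts ∧ (H n).verts = insert u (H (n - 1)).verts) ∧
      (∀ n, 2 ≤ n → n ≤ Fintype.card V →
        ∃ u w, w ∈ (H (n - 1)).verts ∧ u ∉ (H (n - 1)).verts ∧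
          (H n).edgeSet = insert s(u, w) (H (n - 1)).edgeSet) ∧
      (∀ m n, m ≤ n → n ≤ Fintype.card V → τ m ≤ τ n) ∧
      (∀ n ≤ Fintype.card V, (H n).verts = (ndirty G S (τ n))ᶜ) := by
  classical
  set N := Fintype.card V with hNdef
  rcases isEmpty_or_nonempty V with hV | hV
  · -- empty vertex type
    have hN0 : N = 0 := by simp [hNdef]
    refine ⟨fun _ => ⊥, fun _ => 0, rfl, ?_, ?_, ?_, ?_, ?_, ?_, ?_⟩
    · intro n h1 h2; omega
    · rw [hN0]; simp [Set.eq_empty_of_isEmpty]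
    · intro n h1 h2; omega
    · intro n h1 h2; omega
    · intro n h1 h2; omega
    · intro m n _ _; exact le_refl 0
    · intro n hn
      have : n = 0 := by omega
      subst this
      show (∅ : Set V) = (ndirty G S 0)ᶜ
      simp [ndirty, Set.eq_empty_of_isEmpty]
  -- main case
  have hmono : ∀ {s t : ℕ}, s ≤ t → ndirty G S t ⊆ ndirty G S s := by
    have key : ∀ (d s : ℕ), ndirty G S (s + d) ⊆ ndirty G S s := by
      intro d
      induction d with
      | zero => intro s; exact subset_rfl
      | succ d ih => intro s; exact (hM (s + d)).trans (ih s)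
    intro s t h
    obtain ⟨d, rfl⟩ := Nat.exists_eq_add_of_le h
    exact key d s
  set c : ℕ → ℕ := fun t => ((ndirty G S t)ᶜ).ncard with hcdef
  have hfin : ∀ s : Set V, s.Finite := fun s => s.toFinite
  have hcmono : ∀ {s t : ℕ}, s ≤ t → c s ≤ c t := fun h =>
    Set.ncard_le_ncard (Set.compl_subset_compl.2 (hmono h)) (hfin _)
  have hc0 : c 0 = 0 := by
    show ((ndirty G S 0)ᶜ).ncard = 0
    simp [ndirty]
  have hcTf : c Tf = N := by
    show ((ndirty G S Tf)ᶜ).ncard = N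
    rw [hclear]
    simp [Set.ncard_univ, hNdef]
  have hstep : ∀ t, c (t + 1) ≤ c t + 1 := by
    intro t
    have hsub : (ndirty G S (t + 1))ᶜ ⊆ (ndirty G S t)ᶜ ∪ (ndirty G S t \ ndirty G S (t + 1)) := by
      intro x hx
      by_cases hxt : x ∈ ndirty G S t
      · exact Or.inr ⟨hxt, hx⟩
      · exact Or.inl hxt
    calc c (t + 1) ≤ ((ndirty G S t)ᶜ ∪ (ndirty G S t \ ndirty G S (t + 1))).ncard :=
          Set.ncard_le_ncard hsub (hfin _)
      _ ≤ ((ndirty G S t)ᶜ).ncard + (ndirty G S t \ ndirty G S (t + 1)).ncard :=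
          Set.ncard_union_le _ _
      _ ≤ c t + 1 := Nat.add_le_add_left ((Set.ncard_le_one (hfin _)).2
          (fun a ha b hb => cleared_subsingleton t ha hb)) _
  have hexists : ∀ n, n ≤ N → ∃ t, c t = n := by
    intro n hn
    have hge : ∃ t, n ≤ c t := ⟨Tf, by rw [hcTf]; exact hn⟩
    have ht0 : n ≤ c (Nat.find hge) := Nat.find_spec hge
    rcases Nat.eq_zero_or_pos (Nat.find hge) with h0 | h1
    · refine ⟨Nat.find hge, ?_⟩
      rw [h0] at ht0 ⊢
      rw [hc0] at ht0 ⊢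
      omega
    · refine ⟨Nat.find hge, ?_⟩
      have hlt : Nat.find hge - 1 < Nat.find hge := by omega
      have hmin := Nat.find_min hge hlt
      push_neg at hmin
      have h2 := hstep (Nat.find hge - 1)
      have he : Nat.find hge - 1 + 1 = Nat.find hge := by omega
      rw [he] at h2
      omega
  set τ' : ℕ → ℕ := fun n => if h : ∃ t, c t = n then Nat.find h else 0 with hτdef
  have hτval : ∀ n, n ≤ N → c (τ' n) = n := by
    intro n hn
    have h := hexists n hn
    show c (dite _ _ _) = n
    rw [dif_pos h]
    exact Nat.find_spec h
  have hτmin : ∀ n, n ≤ N → ∀ t, t < τ' n → c t ≠ n := by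
    intro n hn t ht
    have h := hexists n hn
    rw [show τ' n = Nat.find h from dif_pos h] at ht
    exact Nat.find_min h ht
  have hτle : ∀ n, n ≤ N → ∀ t, c t = n → τ' n ≤ t := by
    intro n hn t ht
    have h := hexists n hn
    rw [show τ' n = Nat.find h from dif_pos h]
    exact Nat.find_le ht
  have hτmono : ∀ m n, m ≤ n → n ≤ N → τ' m ≤ τ' n := by
    intro m n hmn hn
    by_contra hlt
    push_neg at hlt
    have h1 := hτmin m (hmn.trans hn) (τ' n) hlt
    have h2 : n ≤ m := by
      rw [← hτval n hn, ← hτval m (hmn.trans hn)]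
      exact hcmono hlt.le
    have : m = n := le_antisymm hmn h2
    subst this
    exact h1 (hτval m hn)
  set D : ℕ → Set V := fun n => (ndirty G S (τ' n))ᶜ with hDdef
  have hDcard : ∀ n, n ≤ N → (D n).ncard = n := hτval
  have hDmono : ∀ {m n : ℕ}, m ≤ n → n ≤ N → D m ⊆ D n := by
    intro m n hmn hn
    exact Set.compl_subset_compl.2 (hmono (hτmono m n hmn hn))
  have hτ0 : τ' 0 = 0 := by
    have h := hexists 0 (Nat.zero_le N)
    rw [show τ' 0 = Nat.find h from dif_pos h]
    exact (Nat.find_eq_zero h).2 hc0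
  have hD0 : D 0 = ∅ := by
    show (ndirty G S (τ' 0))ᶜ = ∅
    rw [hτ0]
    simp [ndirty]
  have hτpos : ∀ n, 1 ≤ n → n ≤ N → 1 ≤ τ' n := by
    intro n h1 hn
    by_contra h
    push_neg at h
    interval_cases h' : τ' n
    · have := hτval n hn
      rw [h'] at this
      rw [hc0] at this
      omega
  have hprev : ∀ n, 1 ≤ n → n ≤ N → (ndirty G S (τ' n - 1))ᶜ = D (n - 1) := by
    intro n h1 hn
    have hn1 : n - 1 ≤ N := le_trans (Nat.sub_le n 1) hn
    have hp : τ' n - 1 < τ' n := by have := hτpos n h1 hn; omega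
    have hcle : c (τ' n - 1) ≤ n := by
      calc c (τ' n - 1) ≤ c (τ' n) := hcmono hp.le
        _ = n := hτval n hn
    have hcne : c (τ' n - 1) ≠ n := hτmin n hn _ hp
    have hcge : n - 1 ≤ c (τ' n - 1) := by
      have h2 := hstep (τ' n - 1)
      rw [Nat.sub_add_cancel (hτpos n h1 hn)] at h2
      rw [hτval n hn] at h2
      omega
    have hceq : c (τ' n - 1) = n - 1 := by omega
    have hle2 : τ' (n - 1) ≤ τ' n - 1 := hτle (n - 1) hn1 _ hceq
    have hsub2 : D (n - 1) ⊆ (ndirty G S (τ' n - 1))ᶜ :=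
      Set.compl_subset_compl.2 (hmono hle2)
    refine (Set.eq_of_subset_of_ncard_le hsub2 ?_ (hfin _)).symm
    rw [hDcard (n - 1) hn1]
    exact hceq.le
  -- choose new vertices
  have hu_ex : ∀ n : ℕ, ∃ un : V, 1 ≤ n → n ≤ N →
      un ∉ D (n - 1) ∧ D n = insert un (D (n - 1)) := by
    intro n
    by_cases h : 1 ≤ n ∧ n ≤ N
    · obtain ⟨h1, hn⟩ := h
      have hn1 : n - 1 ≤ N := le_trans (Nat.sub_le n 1) hn
      have hcard1 : (D (n - 1)).ncard < (D n).ncard := by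
        rw [hDcard (n - 1) hn1, hDcard n hn]; omega
      have hss : D (n - 1) ⊆ D n := hDmono (Nat.sub_le n 1) hn
      have hns : ¬ D n ⊆ D (n - 1) := fun hsub =>
        absurd (Set.ncard_le_ncard hsub (hfin _)) (not_le.2 hcard1)
      obtain ⟨un, hunn, hun'⟩ := Set.not_subset.1 hns
      refine ⟨un, fun _ _ => ⟨hun', ?_⟩⟩
      refine (Set.eq_of_subset_of_ncard_le (Set.insert_subset hunn hss) ?_ (hfin _)).symm
      rw [Set.ncard_insert_of_notMem hun' (hfin _), hDcard (n - 1) hn1, hDcard n hn]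
      omega
    · exact ⟨hV.some, fun h1 hn => absurd ⟨h1, hn⟩ h⟩
  choose u hu using hu_ex
  have huD : ∀ k, 1 ≤ k → k ≤ N → u k ∈ D k := by
    intro k h1 hk
    rw [(hu k h1 hk).2]
    exact Set.mem_insert _ _
  -- choose the connecting neighbours
  have hw_ex : ∀ n : ℕ, ∃ wn : V, 2 ≤ n → n ≤ N →
      wn ∈ D (n - 1) ∧ G.Adj (u n) wn := by
    intro n
    by_cases h : 2 ≤ n ∧ n ≤ N
    · obtain ⟨h2, hn⟩ := h
      have h1 : 1 ≤ n := by omega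
      have hn1 : n - 1 ≤ N := le_trans (Nat.sub_le n 1) hn
      have hτ1 : 1 ≤ τ' n := hτpos n h1 hn
      have hconn := (hC (τ' n) hτ1).coe
      have humem : u n ∈ (ndirty G S (τ' n))ᶜ := huD n h1 hn
      have hDne : (D (n - 1)).Nonempty := by
        rw [← Set.ncard_pos (hfin _), hDcard (n - 1) hn1]; omega
      obtain ⟨y, hy⟩ := hDne
      have hymem : y ∈ (ndirty G S (τ' n))ᶜ := hDmono (Nat.sub_le n 1) hn hy
      have hyne : y ≠ u n := fun h => (hu n h1 hn).1 (h ▸ hy)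
      have hstep2 : ∀ (x z : (nclearSubgraph G S (τ' n)).verts)
          (p : (nclearSubgraph G S (τ' n)).coe.Walk x z), (x : V) = u n → (z : V) ≠ u n →
          ∃ b : V, (nclearSubgraph G S (τ' n)).Adj (u n) b := by
        intro x z p
        induction p with
        | nil => intro hxe hze; exact absurd hxe hze
        | cons hadj q ih =>
          rename_i x' m z'
          intro hxe _
          exact ⟨(m : V), hxe ▸ hadj⟩
      obtain ⟨p⟩ := hconn.preconnected ⟨u n, humem⟩ ⟨y, hymem⟩
      obtain ⟨b, hadj'⟩ := hstep2 _ _ p rfl hyne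
      refine ⟨b, fun _ _ => ⟨?_, hadj'.1⟩⟩
      have hbD : b ∈ D n := hadj'.2.2
      have hbne : b ≠ u n := hadj'.1.ne'
      rw [(hu n h1 hn).2] at hbD
      rcases hbD with h | h
      · exact absurd h hbne
      · exact h
    · exact ⟨hV.some, fun h2 hn => absurd ⟨h2, hn⟩ h⟩
  choose w hw using hw_ex
  have hwD : ∀ k, 2 ≤ k → k ≤ N → w k ∈ D (k - 1) := fun k h2 hk => (hw k h2 hk).1
  have hadjk : ∀ k, 2 ≤ k → k ≤ N → G.Adj (u k) (w k) := fun k h2 hk => (hw k h2 hk).2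
  -- the tree subgraphs
  have edge_vert_aux : ∀ (n : ℕ) (a b : V), G.Adj a b →
      (∃ k, 2 ≤ k ∧ k ≤ min n N ∧ s(a, b) = s(u k, w k)) →
      a ∈ (ndirty G S (τ' (min n N)))ᶜ := by
    rintro n a b hab ⟨k, hk2, hkn, he⟩
    have hkN : k ≤ N := le_trans hkn (min_le_right n N)
    have h1k : 1 ≤ k := by omega
    have hmN : min n N ≤ N := min_le_right n N
    have hsub : D k ⊆ D (min n N) := hDmono hkn hmN
    have hcases : (a = u k ∧ b = w k) ∨ (a = w k ∧ b = u k) := Sym2.eq_iff.1 he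
    rcases hcases with ⟨ha, _⟩ | ⟨ha, _⟩
    · rw [ha]; exact hsub (huD k h1k hkN)
    · rw [ha]
      exact hsub (hDmono (Nat.sub_le k 1) hkN (hwD k hk2 hkN))
  set Hf : ℕ → G.Subgraph := fun n =>
    { verts := (ndirty G S (τ' (min n N)))ᶜ
      Adj := fun a b => G.Adj a b ∧ ∃ k, 2 ≤ k ∧ k ≤ min n N ∧ s(a, b) = s(u k, w k)
      adj_sub := fun h => h.1
      edge_vert := fun {a b} h => edge_vert_aux _ a b h.1 h.2
      symm := ⟨fun a b h => ⟨h.1.symm, by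
        obtain ⟨k, hk2, hkn, he⟩ := h.2
        exact ⟨k, hk2, hkn, by rwa [Sym2.eq_swap]⟩⟩⟩ } with hHdef
  have hHverts : ∀ n, (Hf n).verts = D (min n N) := fun n => rfl
  have hHadj : ∀ n a b, (Hf n).Adj a b ↔
      G.Adj a b ∧ ∃ k, 2 ≤ k ∧ k ≤ min n N ∧ s(a, b) = s(u k, w k) := fun n a b => Iff.rfl
  have hSadj : ∀ n a b, (Hf n).spanningCoe.Adj a b ↔
      G.Adj a b ∧ ∃ k, 2 ≤ k ∧ k ≤ min n N ∧ s(a, b) = s(u k, w k) := fun n a b => Iff.rfl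
  have hinsD : ∀ n, 1 ≤ n → n + 1 ≤ N → D (n + 1) = insert (u (n + 1)) (D n) := by
    intro n h1 hsn
    have := (hu (n + 1) (by omega) hsn).2
    rwa [Nat.add_sub_cancel] at this
  have hnotD : ∀ n, 1 ≤ n → n + 1 ≤ N → u (n + 1) ∉ D n := by
    intro n h1 hsn
    have := (hu (n + 1) (by omega) hsn).1
    rwa [Nat.add_sub_cancel] at this
  have hwD' : ∀ n, 1 ≤ n → n + 1 ≤ N → w (n + 1) ∈ D n := by
    intro n h1 hsn
    have := hwD (n + 1) (by omega) hsn
    rwa [Nat.add_sub_cancel] at this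
  -- connectivity
  have hconn : ∀ n, 1 ≤ n → n ≤ N → (Hf n).Connected := by
    intro n h1
    induction n, h1 using Nat.le_induction with
    | base =>
      intro hN1
      have hsing : Hf 1 = G.singletonSubgraph (u 1) := by
        refine Subgraph.ext ?_ ?_
        · show (ndirty G S (τ' (min 1 N)))ᶜ = _
          rw [singletonSubgraph_verts, min_eq_left hN1]
          show D 1 = {u 1}
          have h10 : (1 : ℕ) - 1 = 0 := rfl
          have := (hu 1 le_rfl hN1).2
          rw [h10] at this
          rw [this, hD0]
          simp
        · ext a b
          simp only [hHadj, singletonSubgraph_adj, Pi.bot_apply]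
          constructor
          · rintro ⟨_, k, hk2, hkn, _⟩
            have := le_trans hkn (min_le_left 1 N)
            omega
          · intro h
            exact h.elim
      rw [hsing]
      exact Subgraph.singletonSubgraph_connected
    | succ n hn1 ih =>
      intro hsn
      have hnN : n ≤ N := by omega
      have hadj' := hadjk (n + 1) (by omega) hsn
      have hw' := hwD' n hn1 hsn
      have heq : Hf (n + 1) = Hf n ⊔ G.subgraphOfAdj hadj' := by
        refine Subgraph.ext ?_ ?_
        · rw [Subgraph.verts_sup, hHverts, hHverts, subgraphOfAdj_verts,
            min_eq_left hsn, min_eq_left hnN, hinsD n hn1 hsn]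
          ext z
          simp only [Set.mem_insert_iff, Set.mem_union, Set.mem_singleton_iff]
          constructor
          · rintro (rfl | hz)
            · exact Or.inr (Or.inl rfl)
            · exact Or.inl hz
          · rintro (hz | rfl | rfl)
            · exact Or.inr hz
            · exact Or.inl rfl
            · exact Or.inr hw'
        · ext a b
          simp only [hHadj, Subgraph.sup_adj, subgraphOfAdj_adj]
          rw [min_eq_left hsn, min_eq_left hnN]
          constructor
          · rintro ⟨hab, k, hk2, hkn, he⟩
            rcases eq_or_lt_of_le hkn with heq | hlt
            · subst heq
              exact Or.inr he.symm
            · exact Or.inl ⟨hab, k, hk2, by omega, he⟩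
          · rintro (⟨hab, k, hk2, hkn, he⟩ | he)
            · exact ⟨hab, k, hk2, by omega, he⟩
            · have hcases := Sym2.eq_iff.1 he.symm
              refine ⟨?_, n + 1, by omega, le_rfl, he.symm⟩
              rcases hcases with ⟨ha, hb⟩ | ⟨ha, hb⟩
              · rw [ha, hb]; exact hadj'
              · rw [ha, hb]; exact hadj'.symm
      rw [heq]
      refine Subgraph.connected_sup (ih hnN).preconnected (Subgraph.subgraphOfAdj_connected hadj').preconnected ⟨w (n + 1), ?_⟩
      rw [Subgraph.verts_inf, hHverts, min_eq_left hnN]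
      exact ⟨hw', by rw [subgraphOfAdj_verts]; exact Or.inr rfl⟩
  -- acyclicity of the spanning coercion
  have hacy : ∀ n, n ≤ N → (Hf n).spanningCoe.IsAcyclic := by
    intro n
    induction n with
    | zero =>
      intro _ v cyc hcyc
      cases cyc with
      | nil => exact hcyc.ne_nil rfl
      | cons h q =>
        obtain ⟨_, k, hk2, hkn, _⟩ := (hSadj 0 _ _).1 h
        have := le_trans hkn (min_le_left 0 N)
        omega
    | succ n ih =>
      intro hsn
      by_cases hn0 : n = 0
      · subst hn0
        intro v cyc hcyc
        cases cyc with
        | nil => exact hcyc.ne_nil rfl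
        | cons h q =>
          obtain ⟨_, k, hk2, hkn, _⟩ := (hSadj 1 _ _).1 h
          have := le_trans hkn (min_le_left 1 N)
          omega
      · have h1n : 1 ≤ n := by omega
        have hnN : n ≤ N := by omega
        have hadj' := hadjk (n + 1) (by omega) hsn
        have hnD := hnotD n h1n hsn
        have huniq : ∀ ⦃y z : V⦄, (Hf (n + 1)).spanningCoe.Adj (u (n + 1)) y →
            (Hf (n + 1)).spanningCoe.Adj (u (n + 1)) z → y = z := by
          have key : ∀ y, (Hf (n + 1)).spanningCoe.Adj (u (n + 1)) y → y = w (n + 1) := by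
            intro y hy
            obtain ⟨hab, k, hk2, hkn, he⟩ := (hSadj (n + 1) _ _).1 hy
            rw [min_eq_left hsn] at hkn
            have hkN : k ≤ N := by omega
            rcases eq_or_lt_of_le hkn with heq | hlt
            · subst heq
              rcases Sym2.eq_iff.1 he with ⟨_, hb⟩ | ⟨ha, hb⟩
              · exact hb
              · exact absurd ha hadj'.ne
            · exfalso
              have hkn' : k ≤ n := by omega
              rcases Sym2.eq_iff.1 he with ⟨ha, _⟩ | ⟨ha, _⟩
              · exact hnD (ha ▸ hDmono hkn' hnN (huD k (by omega) hkN))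
              · exact hnD (ha ▸ hDmono (le_trans (Nat.sub_le k 1) hkn') hnN (hwD k hk2 hkN))
          intro y z hy hz
          rw [key y hy, key z hz]
        intro v cyc hcyc
        by_cases hmem : u (n + 1) ∈ cyc.support
        · exact no_cycle_through huniq hcyc hmem
        · have claim : ∀ a b : V, s(a, b) ∈ cyc.edges → (Hf n).spanningCoe.Adj a b := by
            intro a b he
            have he' := cyc.edges_subset_edgeSet he
            rw [SimpleGraph.mem_edgeSet] at he'
            obtain ⟨hab, k, hk2, hkn, hee⟩ := (hSadj (n + 1) _ _).1 he'
            rw [min_eq_left hsn] at hkn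
            rcases eq_or_lt_of_le hkn with heq | hlt
            · exfalso
              subst heq
              rcases Sym2.eq_iff.1 hee with ⟨ha, _⟩ | ⟨_, hb⟩
              · exact hmem (by rw [← ha]; exact cyc.fst_mem_support_of_mem_edges he)
              · exact hmem (by rw [← hb]; exact cyc.snd_mem_support_of_mem_edges he)
            · exact (hSadj n a b).2 ⟨hab, k, hk2, by rw [min_eq_left hnN]; omega, hee⟩
          have hedges : ∀ e ∈ cyc.edges, e ∈ (Hf n).spanningCoe.edgeSet := by
            intro e
            induction e using Sym2.ind with
            | _ a b =>
              intro he
              rw [SimpleGraph.mem_edgeSet]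
              exact claim a b he
          exact ih hnN (cyc.transfer _ hedges) (hcyc.transfer hedges)
  refine ⟨Hf, τ', ?_, ?_, ?_, ?_, ?_, ?_, hτmono, ?_⟩
  · -- Hf 0 = ⊥
    refine Subgraph.ext ?_ ?_
    · show (ndirty G S (τ' (min 0 N)))ᶜ = _
      rw [Subgraph.verts_bot, min_eq_left (Nat.zero_le N)]
      show D 0 = ∅
      exact hD0
    · ext a b
      simp only [hHadj]
      constructor
      · rintro ⟨_, k, hk2, hkn, _⟩
        have := le_trans hkn (min_le_left 0 N)
        omega
      · intro h
        exact absurd h Subgraph.not_bot_adj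
  · -- trees
    intro n h1 hn
    refine ⟨(hconn n h1 hn).coe, ?_⟩
    intro v cyc hcyc
    let f : (Hf n).coe →g (Hf n).spanningCoe := ⟨Subtype.val, fun {a b} h => h⟩
    exact hacy n hn (cyc.map f) ((Walk.map_isCycle_iff_of_injective (fun a b h => Subtype.val_injective (show (a : V) = (b : V) from h))).2 hcyc)
  · -- spanning
    rw [hHverts, min_self]
    refine Set.eq_of_subset_of_ncard_le (Set.subset_univ _) ?_ (hfin _)
    rw [hDcard N le_rfl, Set.ncard_univ, Nat.card_eq_fintype_card]
  · -- monotone subgraphs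
    intro n h1 hn
    refine ⟨?_, ?_⟩
    · show D (min (n - 1) N) ⊆ D (min n N)
      exact hDmono (min_le_min (Nat.sub_le n 1) le_rfl) (min_le_right n N)
    · intro a b h
      obtain ⟨hab, k, hk2, hkn, he⟩ := (hHadj (n - 1) a b).1 h
      exact (hHadj n a b).2 ⟨hab, k, hk2,
        le_trans hkn (min_le_min (Nat.sub_le n 1) le_rfl), he⟩
  · -- one new vertex
    intro n h1 hn
    have hn1 : n - 1 ≤ N := le_trans (Nat.sub_le n 1) hn
    refine ⟨u n, ?_, ?_⟩
    · show u n ∉ D (min (n - 1) N)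
      rw [min_eq_left hn1]
      exact (hu n h1 hn).1
    · show D (min n N) = insert (u n) (D (min (n - 1) N))
      rw [min_eq_left hn, min_eq_left hn1]
      exact (hu n h1 hn).2
  · -- one new edge
    intro n h2 hn
    have h1 : 1 ≤ n := by omega
    have hn1 : n - 1 ≤ N := le_trans (Nat.sub_le n 1) hn
    refine ⟨u n, w n, ?_, ?_, ?_⟩
    · show w n ∈ D (min (n - 1) N)
      rw [min_eq_left hn1]
      exact hwD n h2 hn
    · show u n ∉ D (min (n - 1) N)
      rw [min_eq_left hn1]
      exact (hu n h1 hn).1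
    · ext e
      induction e using Sym2.ind with
      | _ a b =>
        simp only [Subgraph.mem_edgeSet, Set.mem_insert_iff, hHadj]
        rw [min_eq_left hn, min_eq_left hn1]
        constructor
        · rintro ⟨hab, k, hk2, hkn, he⟩
          rcases eq_or_lt_of_le hkn with heq | hlt
          · subst heq
            exact Or.inl he
          · exact Or.inr ⟨hab, k, hk2, by omega, he⟩
        · rintro (he | ⟨hab, k, hk2, hkn, he⟩)
          · have hadjn := hadjk n h2 hn
            refine ⟨?_, n, h2, le_rfl, he⟩
            rcases Sym2.eq_iff.1 he with ⟨ha, hb⟩ | ⟨ha, hb⟩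
            · rw [ha, hb]; exact hadjn
            · rw [ha, hb]; exact hadjn.symm
          · exact ⟨hab, k, hk2, by omega, he⟩
  · -- vertex sets
    intro n hn
    show D (min n N) = (ndirty G S (τ' n))ᶜ
    rw [min_eq_left hn]
end
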